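/- Let n ≥ 3 and let f : ℝ^{n-1} → ℝ be bounded and continuous. Then for every compact set K ⊆ ℝ^{n-1}, sup_{y ∈ K} |DLf(x,y) − (1/2) f(y)| → 0 as x → 0⁺. (Jump relation for the double layer potential on the half-space.) -/

import Mathlib

open MeasureTheory Real Filter

/-- Surface measure of the unit sphere in `ℝⁿ`: `σ_{n-1} = 2 π^{n/2} / Γ(n/2)`. -/
noncomputable def sphereMeasure (n : ℕ) : ℝ :=
  2 * Real.pi ^ ((n : ℝ) / 2) / Real.Gamma ((n : ℝ) / 2)

/-- The double layer potential of `f : ℝ^{n-1} → ℝ` on the half-space, for `x > 0`: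
`DLf(x,y) = (1/σ_{n-1}) ∫ x (x² + |y-y'|²)^{-n/2} f(y') dy'`. -/
noncomputable def doubleLayer (n : ℕ) (f : EuclideanSpace ℝ (Fin (n - 1)) → ℝ)
    (x : ℝ) (y : EuclideanSpace ℝ (Fin (n - 1))) : ℝ :=
  (1 / sphereMeasure n) * ∫ y' : EuclideanSpace ℝ (Fin (n - 1)),
    x * (x ^ 2 + ‖y - y'‖ ^ 2) ^ (-(n : ℝ) / 2) * f y'

section Aux

open Set
open scoped ENNReal Topology

lemma my_inner_t (b y : ℝ) (hb0 : 0 < b) (hy : 0 < y) (a : ℝ) :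
    (∫⁻ t in Ioi (0:ℝ),
        ENNReal.ofReal (y ^ a * (t ^ (b - 1) * Real.exp (-((1 + y ^ 2) * t)))))
      = ENNReal.ofReal (Real.Gamma b * (y ^ a * (1 + y ^ 2) ^ (-b))) := by
  have h1y : (0:ℝ) < 1 + y ^ 2 := by positivity
  have hint : IntegrableOn (fun t : ℝ => t ^ (b - 1) * Real.exp (-((1 + y ^ 2) * t)))
      (Ioi 0) := by
    have h := integrableOn_rpow_mul_exp_neg_mul_rpow (p := 1) (s := b - 1)
      (b := 1 + y ^ 2) (by linarith) one_pos h1y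
    refine h.congr_fun (fun t ht => ?_) measurableSet_Ioi
    simp only [Real.rpow_one, pow_one, neg_mul]
  have hnn : 0 ≤ᵐ[volume.restrict (Ioi (0:ℝ))]
      fun t : ℝ => t ^ (b - 1) * Real.exp (-((1 + y ^ 2) * t)) := by
    refine (ae_restrict_iff' measurableSet_Ioi).2 (ae_of_all _ fun t ht => ?_)
    exact mul_nonneg (Real.rpow_nonneg (le_of_lt ht) _) (Real.exp_nonneg _)
  calc ∫⁻ t in Ioi (0:ℝ),
        ENNReal.ofReal (y ^ a * (t ^ (b - 1) * Real.exp (-((1 + y ^ 2) * t))))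
      = ∫⁻ t in Ioi (0:ℝ), ENNReal.ofReal (y ^ a) *
          ENNReal.ofReal (t ^ (b - 1) * Real.exp (-((1 + y ^ 2) * t))) := by
        simp_rw [← ENNReal.ofReal_mul (Real.rpow_nonneg hy.le a)]
    _ = ENNReal.ofReal (y ^ a) * ∫⁻ t in Ioi (0:ℝ),
          ENNReal.ofReal (t ^ (b - 1) * Real.exp (-((1 + y ^ 2) * t))) :=
        lintegral_const_mul' _ _ ENNReal.ofReal_ne_top
    _ = ENNReal.ofReal (y ^ a) *
          ENNReal.ofReal (∫ t in Ioi (0:ℝ), t ^ (b - 1) * Real.exp (-((1 + y ^ 2) * t))) := by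
        rw [MeasureTheory.ofReal_integral_eq_lintegral_ofReal hint hnn]
    _ = ENNReal.ofReal (Real.Gamma b * (y ^ a * (1 + y ^ 2) ^ (-b))) := by
        rw [Real.integral_rpow_mul_exp_neg_mul_Ioi hb0 h1y,
          ← ENNReal.ofReal_mul (Real.rpow_nonneg hy.le a)]
        congr 1
        rw [one_div, Real.inv_rpow h1y.le, ← Real.rpow_neg h1y.le]
        ring

lemma my_inner_y (a t : ℝ) (ha : -1 < a) (ht : 0 < t) :
    (∫⁻ y in Ioi (0:ℝ), ENNReal.ofReal (y ^ a * Real.exp (-t * y ^ 2)))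
      = ENNReal.ofReal (t ^ (-(a + 1) / 2) * (1 / 2) * Real.Gamma ((a + 1) / 2)) := by
  have hint : IntegrableOn (fun y : ℝ => y ^ a * Real.exp (-t * y ^ 2)) (Ioi 0) := by
    have h := integrableOn_rpow_mul_exp_neg_mul_rpow (p := 2) (s := a) (b := t)
      ha two_pos ht
    refine h.congr_fun (fun y hy => ?_) measurableSet_Ioi
    norm_num [Real.rpow_natCast]
  have hnn : 0 ≤ᵐ[volume.restrict (Ioi (0:ℝ))]
      fun y : ℝ => y ^ a * Real.exp (-t * y ^ 2) := by
    refine (ae_restrict_iff' measurableSet_Ioi).2 (ae_of_all _ fun y hy => ?_)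
    exact mul_nonneg (Real.rpow_nonneg (le_of_lt hy) _) (Real.exp_nonneg _)
  rw [← MeasureTheory.ofReal_integral_eq_lintegral_ofReal hint hnn]
  congr 1
  have h := integral_rpow_mul_exp_neg_mul_rpow (p := 2) (q := a) (b := t)
    two_pos ha ht
  rw [← h]
  refine setIntegral_congr_fun measurableSet_Ioi (fun y hy => ?_)
  norm_num [Real.rpow_natCast]

lemma my_oneD {a b : ℝ} (ha : -1 < a) (hab : (a + 1) / 2 < b) :
    ∫ y in Ioi (0:ℝ), y ^ a * (1 + y ^ 2) ^ (-b) =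
      Real.Gamma ((a + 1) / 2) * Real.Gamma (b - (a + 1) / 2) / (2 * Real.Gamma b) := by
  have hc : 0 < (a + 1) / 2 := by linarith
  have hb0 : 0 < b := lt_trans hc hab
  have hbc : 0 < b - (a + 1) / 2 := by linarith
  have hΓb : 0 < Real.Gamma b := Real.Gamma_pos_of_pos hb0
  have hΓc : 0 < Real.Gamma ((a + 1) / 2) := Real.Gamma_pos_of_pos hc
  have hΓbc : 0 < Real.Gamma (b - (a + 1) / 2) := Real.Gamma_pos_of_pos hbc
  set F : ℝ → ℝ → ℝ≥0∞ := fun y t =>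
    ENNReal.ofReal (y ^ a * (t ^ (b - 1) * Real.exp (-((1 + y ^ 2) * t)))) with hF
  have hmeas : AEMeasurable (fun p : ℝ × ℝ => F p.1 p.2)
      ((volume.restrict (Ioi (0:ℝ))).prod (volume.restrict (Ioi (0:ℝ)))) := by
    apply Measurable.aemeasurable
    apply Measurable.ennreal_ofReal
    fun_prop
  have hswap := lintegral_lintegral_swap (μ := volume.restrict (Ioi (0:ℝ))) (ν := volume.restrict (Ioi (0:ℝ))) (f := F) hmeas
  -- LHS of swap
  have hLHS : (∫⁻ y in Ioi (0:ℝ), ∫⁻ t in Ioi (0:ℝ), F y t)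
      = ∫⁻ y in Ioi (0:ℝ),
          ENNReal.ofReal (Real.Gamma b * (y ^ a * (1 + y ^ 2) ^ (-b))) := by
    refine setLIntegral_congr_fun measurableSet_Ioi (fun y hy => ?_)
    exact my_inner_t b y hb0 hy a
  -- RHS of swap
  have hRHS : (∫⁻ t in Ioi (0:ℝ), ∫⁻ y in Ioi (0:ℝ), F y t)
      = ENNReal.ofReal ((1 / 2) * Real.Gamma ((a + 1) / 2) * Real.Gamma (b - (a + 1) / 2)) := by
    have step1 : ∀ t : ℝ, t ∈ Ioi (0:ℝ) → (∫⁻ y in Ioi (0:ℝ), F y t)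
        = ENNReal.ofReal ((1 / 2) * Real.Gamma ((a + 1) / 2) *
            (t ^ (b - (a + 1) / 2 - 1) * Real.exp (-(1 * t)))) := by
      intro t ht
      have ht' : (0:ℝ) < t := ht
      have : ∀ y : ℝ, y ∈ Ioi (0:ℝ) → F y t
          = ENNReal.ofReal (t ^ (b - 1) * Real.exp (-t)) *
              ENNReal.ofReal (y ^ a * Real.exp (-t * y ^ 2)) := by
        intro y hy
        rw [show F y t = ENNReal.ofReal (y ^ a * (t ^ (b - 1) * Real.exp (-((1 + y ^ 2) * t))))
            from rfl, ← ENNReal.ofReal_mul (by positivity)]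
        congr 1
        rw [show -((1 + y ^ 2) * t) = -t + -t * y ^ 2 by ring, Real.exp_add]
        ring
      rw [setLIntegral_congr_fun measurableSet_Ioi this,
        lintegral_const_mul' _ _ ENNReal.ofReal_ne_top, my_inner_y a t ha ht',
        ← ENNReal.ofReal_mul (by positivity)]
      congr 1
      have h2 : t ^ (b - 1) * t ^ (-(a + 1) / 2) = t ^ (b - (a + 1) / 2 - 1) := by
        rw [← Real.rpow_add ht']; ring_nf
      rw [show (-(1 * t) : ℝ) = -t by ring, ← h2]
      ring
    rw [setLIntegral_congr_fun measurableSet_Ioi step1]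
    have hnn : 0 ≤ᵐ[volume.restrict (Ioi (0:ℝ))]
        fun t : ℝ => t ^ (b - (a + 1) / 2 - 1) * Real.exp (-(1 * t)) := by
      refine (ae_restrict_iff' measurableSet_Ioi).2 (ae_of_all _ fun t ht => ?_)
      exact mul_nonneg (Real.rpow_nonneg (le_of_lt ht) _) (Real.exp_nonneg _)
    have hint : IntegrableOn (fun t : ℝ => t ^ (b - (a + 1) / 2 - 1) * Real.exp (-(1 * t)))
        (Ioi 0) := by
      have h := integrableOn_rpow_mul_exp_neg_mul_rpow (p := 1) (s := b - (a + 1) / 2 - 1)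
        (b := 1) (by linarith) one_pos one_pos
      refine h.congr_fun (fun u hu => ?_) measurableSet_Ioi
      simp only [Real.rpow_one, pow_one, neg_mul]
    calc (∫⁻ t in Ioi (0:ℝ), ENNReal.ofReal ((1 / 2) * Real.Gamma ((a + 1) / 2) *
            (t ^ (b - (a + 1) / 2 - 1) * Real.exp (-(1 * t)))))
        = ENNReal.ofReal ((1 / 2) * Real.Gamma ((a + 1) / 2)) *
            ∫⁻ t in Ioi (0:ℝ),
              ENNReal.ofReal (t ^ (b - (a + 1) / 2 - 1) * Real.exp (-(1 * t))) := by
          simp_rw [← lintegral_const_mul' _ _ ENNReal.ofReal_ne_top,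
            ← ENNReal.ofReal_mul (by positivity : (0:ℝ) ≤ (1 / 2) * Real.Gamma ((a + 1) / 2))]
      _ = ENNReal.ofReal ((1 / 2) * Real.Gamma ((a + 1) / 2) *
            Real.Gamma (b - (a + 1) / 2)) := by
          rw [← MeasureTheory.ofReal_integral_eq_lintegral_ofReal hint hnn,
            Real.integral_rpow_mul_exp_neg_mul_Ioi hbc one_pos,
            ← ENNReal.ofReal_mul (by positivity)]
          norm_num
  -- extract real integral
  have key : (∫⁻ y in Ioi (0:ℝ),
      ENNReal.ofReal (Real.Gamma b * (y ^ a * (1 + y ^ 2) ^ (-b))))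
      = ENNReal.ofReal ((1 / 2) * Real.Gamma ((a + 1) / 2) * Real.Gamma (b - (a + 1) / 2)) := by
    rw [← hLHS, hswap, hRHS]
  have key2 : ENNReal.ofReal (Real.Gamma b) *
      (∫⁻ y in Ioi (0:ℝ), ENNReal.ofReal (y ^ a * (1 + y ^ 2) ^ (-b)))
      = ENNReal.ofReal ((1 / 2) * Real.Gamma ((a + 1) / 2) * Real.Gamma (b - (a + 1) / 2)) := by
    rw [← key, ← lintegral_const_mul' _ _ ENNReal.ofReal_ne_top]
    refine lintegral_congr fun y => ?_
    rw [← ENNReal.ofReal_mul hΓb.le]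
  have hax : ∫ y in Ioi (0:ℝ), y ^ a * (1 + y ^ 2) ^ (-b)
      = (∫⁻ y in Ioi (0:ℝ), ENNReal.ofReal (y ^ a * (1 + y ^ 2) ^ (-b))).toReal := by
    rw [MeasureTheory.integral_eq_lintegral_of_nonneg_ae]
    · refine (ae_restrict_iff' measurableSet_Ioi).2 (ae_of_all _ fun y hy => ?_)
      have h1y : (0:ℝ) < 1 + y ^ 2 := by positivity
      exact mul_nonneg (Real.rpow_nonneg (le_of_lt hy) _) (Real.rpow_nonneg h1y.le _)
    · apply Measurable.aestronglyMeasurable; fun_prop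
  have := congrArg ENNReal.toReal key2
  rw [ENNReal.toReal_mul, ENNReal.toReal_ofReal hΓb.le, ENNReal.toReal_ofReal (by positivity)]
    at this
  rw [hax]
  field_simp at this ⊢
  linarith [this]

lemma my_const {n : ℕ} (hn : 3 ≤ n) :
    ∫ u : EuclideanSpace ℝ (Fin (n - 1)), (1 + ‖u‖ ^ 2) ^ (-(n:ℝ) / 2)
      = sphereMeasure n / 2 := by
  have hd1 : 1 ≤ n - 1 := by omega
  have hn3 : (3:ℝ) ≤ (n:ℝ) := by exact_mod_cast hn
  have hdn : ((n - 1 : ℕ) : ℝ) = (n : ℝ) - 1 := by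
    push_cast [Nat.cast_sub (by omega : 1 ≤ n)]; ring
  haveI : Nonempty (Fin (n - 1)) := ⟨⟨0, by omega⟩⟩
  haveI : Nontrivial (EuclideanSpace ℝ (Fin (n - 1))) := by
    refine Module.nontrivial_of_finrank_pos (R := ℝ) ?_
    rw [finrank_euclideanSpace_fin]; omega
  have hfr : Module.finrank ℝ (EuclideanSpace ℝ (Fin (n - 1))) = n - 1 :=
    finrank_euclideanSpace_fin
  have hpolar := MeasureTheory.integral_fun_norm_addHaar
    (volume : Measure (EuclideanSpace ℝ (Fin (n - 1))))
    (fun r : ℝ => (1 + r ^ 2) ^ (-(n:ℝ) / 2))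
  rw [hfr] at hpolar
  rw [hpolar]
  have h1 : ∫ y in Ioi (0:ℝ), y ^ (n - 1 - 1) • (1 + y ^ 2) ^ (-(n:ℝ) / 2)
      = ∫ y in Ioi (0:ℝ), y ^ (((n-1:ℕ):ℝ) - 1) * (1 + y ^ 2) ^ (-((n:ℝ) / 2)) := by
    refine setIntegral_congr_fun measurableSet_Ioi (fun y hy => ?_)
    rw [smul_eq_mul, neg_div]
    congr 1
    rw [← Real.rpow_natCast y (n - 1 - 1)]
    congr 1
    push_cast [Nat.cast_sub hd1, Nat.cast_sub (by omega : 1 ≤ n)]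
    ring
  have ha : (-1:ℝ) < ((n-1:ℕ):ℝ) - 1 := by rw [hdn]; linarith
  have hab : ((((n-1:ℕ):ℝ) - 1) + 1) / 2 < (n:ℝ)/2 := by rw [hdn]; linarith
  rw [h1, my_oneD ha hab]
  have e1 : ((((n-1:ℕ):ℝ) - 1) + 1) / 2 = ((n-1:ℕ):ℝ)/2 := by ring
  have e2 : (n:ℝ)/2 - ((n-1:ℕ):ℝ) / 2 = 1/2 := by rw [hdn]; ring
  rw [e1, e2, Real.Gamma_one_half_eq]
  -- volume of the unit ball
  have hball : ((volume (Metric.ball (0 : EuclideanSpace ℝ (Fin (n - 1))) 1)).toReal : ℝ)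
      = Real.sqrt π ^ (n - 1) / Real.Gamma (((n-1:ℕ):ℝ) / 2 + 1) := by
    rw [EuclideanSpace.volume_ball, Fintype.card_fin]
    rw [ENNReal.ofReal_one, one_pow, one_mul, ENNReal.toReal_ofReal (by positivity)]
  rw [measureReal_def, hball]
  -- Gamma recurrence
  have hd0 : ((n-1:ℕ):ℝ)/2 ≠ 0 := by rw [hdn]; intro h; nlinarith
  have hrec : Real.Gamma (((n-1:ℕ):ℝ)/2 + 1) = ((n-1:ℕ):ℝ)/2 * Real.Gamma (((n-1:ℕ):ℝ)/2) :=
    Real.Gamma_add_one hd0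
  rw [hrec]
  -- sqrt pi powers
  have hsp : Real.sqrt π ^ (n - 1) * Real.sqrt π = π ^ ((n:ℝ)/2) := by
    have h1 : Real.sqrt π ^ (n - 1) * Real.sqrt π = Real.sqrt π ^ n := by
      rw [← pow_succ]; congr 1; omega
    rw [h1, ← Real.rpow_natCast (Real.sqrt π) n, Real.sqrt_eq_rpow,
      ← Real.rpow_mul pi_pos.le]
    congr 1; ring
  have hΓd : 0 < Real.Gamma (((n-1:ℕ):ℝ)/2) := Real.Gamma_pos_of_pos (by rw [hdn]; linarith)
  have hΓn : 0 < Real.Gamma ((n:ℝ)/2) := Real.Gamma_pos_of_pos (by linarith)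
  rw [sphereMeasure, nsmul_eq_mul, smul_eq_mul, ← hsp]
  have hne1 : ((n-1:ℕ):ℝ) ≠ 0 := by rw [hdn]; intro h; nlinarith
  set D := ((n-1:ℕ):ℝ) with hD
  set G := Real.Gamma (D/2) with hG
  set H := Real.Gamma ((n:ℝ)/2) with hH
  set S := Real.sqrt π ^ (n-1) with hS
  field_simp

lemma my_integrable {n : ℕ} (hn : 3 ≤ n) :
    Integrable (fun u : EuclideanSpace ℝ (Fin (n - 1)) => (1 + ‖u‖ ^ 2) ^ (-(n:ℝ) / 2)) := by
  have hfr : (Module.finrank ℝ (EuclideanSpace ℝ (Fin (n - 1))) : ℝ) < (n:ℝ) := by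
    rw [finrank_euclideanSpace_fin]
    have : (n - 1 : ℕ) < n := by omega
    exact_mod_cast this
  have hbase := integrable_one_add_norm (E := EuclideanSpace ℝ (Fin (n - 1)))
    (μ := volume) (r := (n:ℝ)) hfr
  refine (hbase.const_mul ((2:ℝ) ^ ((n:ℝ)/2))).mono' ?_ ?_
  · apply Continuous.aestronglyMeasurable
    have hc : Continuous fun u : EuclideanSpace ℝ (Fin (n - 1)) => 1 + ‖u‖ ^ 2 := by
      continuity
    apply hc.rpow_const
    intro u; left; positivity
  · refine ae_of_all _ fun u => ?_
    have h1 : (0:ℝ) < 1 + ‖u‖ ^ 2 := by positivity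
    rw [Real.norm_eq_abs, abs_of_nonneg (Real.rpow_nonneg h1.le _)]
    have := rpow_neg_one_add_norm_sq_le u (by positivity : (0:ℝ) < (n:ℝ))
    simpa [neg_div] using this

lemma my_repr {n : ℕ} (hn : 3 ≤ n) (f : EuclideanSpace ℝ (Fin (n - 1)) → ℝ)
    {x : ℝ} (hx : 0 < x) (y : EuclideanSpace ℝ (Fin (n - 1))) :
    (∫ y' : EuclideanSpace ℝ (Fin (n - 1)),
        x * (x ^ 2 + ‖y - y'‖ ^ 2) ^ (-(n : ℝ) / 2) * f y')
      = ∫ u : EuclideanSpace ℝ (Fin (n - 1)),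
          (1 + ‖u‖ ^ 2) ^ (-(n:ℝ) / 2) * f (y - x • u) := by
  have hdn : ((n - 1 : ℕ) : ℝ) = (n : ℝ) - 1 := by
    push_cast [Nat.cast_sub (by omega : 1 ≤ n)]; ring
  set Φ : EuclideanSpace ℝ (Fin (n - 1)) → ℝ :=
    fun v => x * (x ^ 2 + ‖v‖ ^ 2) ^ (-(n : ℝ) / 2) * f (y - v) with hΦ
  have h1 : (∫ y' : EuclideanSpace ℝ (Fin (n - 1)),
      x * (x ^ 2 + ‖y - y'‖ ^ 2) ^ (-(n : ℝ) / 2) * f y') = ∫ v, Φ v := by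
    rw [← integral_sub_left_eq_self Φ volume y]
    congr 1; funext y'
    rw [hΦ]; simp only [sub_sub_cancel]
  rw [h1]
  have h2 := MeasureTheory.Measure.integral_comp_smul
    (volume : Measure (EuclideanSpace ℝ (Fin (n - 1)))) Φ x
  rw [finrank_euclideanSpace_fin] at h2
  have hxp : (0:ℝ) < x ^ (n - 1) := by positivity
  have h3 : (∫ v, Φ v) = x ^ (n - 1) • ∫ u, Φ (x • u) := by
    rw [h2, abs_of_nonneg (by positivity : (0:ℝ) ≤ (x ^ (n-1))⁻¹), smul_smul,
      mul_inv_cancel₀ hxp.ne', one_smul]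
  rw [h3, ← integral_smul]
  congr 1; funext u
  have hns : ‖x • u‖ ^ 2 = x ^ 2 * ‖u‖ ^ 2 := by
    rw [norm_smul, mul_pow, Real.norm_eq_abs, sq_abs]
  have hx2 : ((x:ℝ) ^ 2) ^ (-(n:ℝ)/2) = x ^ (-(n:ℝ)) := by
    rw [← Real.rpow_natCast x 2, ← Real.rpow_mul hx.le]
    congr 1; ring
  have hxn : (x:ℝ) ^ (n - 1) * (x * x ^ (-(n:ℝ))) = 1 := by
    rw [show x * x ^ (-(n:ℝ)) = x ^ (1 + -(n:ℝ)) by rw [Real.rpow_add hx, Real.rpow_one],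
      ← Real.rpow_natCast x (n - 1), ← Real.rpow_add hx, hdn,
      show (n:ℝ) - 1 + (1 + -(n:ℝ)) = 0 by ring, Real.rpow_zero]
  rw [smul_eq_mul, hΦ]
  simp only []
  rw [hns, show x ^ 2 + x ^ 2 * ‖u‖ ^ 2 = x ^ 2 * (1 + ‖u‖ ^ 2) by ring,
    Real.mul_rpow (by positivity) (by positivity), hx2]
  linear_combination (1 + ‖u‖ ^ 2) ^ (-(n:ℝ)/2) * f (y - x • u) * hxn

end Aux

section Main
open Set
open scoped ENNReal Topology

/-- Jump relation for the double layer potential on the half-space: if `f` is bounded and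
continuous, then `DLf(x,·) → (1/2) f` uniformly on compact sets as `x → 0⁺`. -/
theorem doubleLayer_jump (n : ℕ) (hn : 3 ≤ n)
    (f : EuclideanSpace ℝ (Fin (n - 1)) → ℝ)
    (hf_cont : Continuous f) (hf_bdd : ∃ M : ℝ, ∀ y, |f y| ≤ M)
    (K : Set (EuclideanSpace ℝ (Fin (n - 1)))) (hK : IsCompact K) :
    TendstoUniformlyOn (fun x y => doubleLayer n f x y) (fun y => (1 / 2) * f y)
      (nhdsWithin 0 (Set.Ioi 0)) K := by
  classical
  obtain ⟨M₀, hM₀⟩ := hf_bdd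
  set g : EuclideanSpace ℝ (Fin (n - 1)) → ℝ := fun u => (1 + ‖u‖ ^ 2) ^ (-(n:ℝ) / 2) with hg
  have hg_nonneg : ∀ u, 0 ≤ g u := fun u => Real.rpow_nonneg (by positivity) _
  have hg_int : Integrable g := my_integrable hn
  have hg_val : ∫ u, g u = sphereMeasure n / 2 := my_const hn
  have hσ : 0 < sphereMeasure n := by
    have h2 : (0:ℝ) < (n:ℝ)/2 := by positivity
    have := Real.Gamma_pos_of_pos h2
    rw [sphereMeasure]; positivity
  set M : ℝ := max M₀ 0 with hM
  have hMf : ∀ z, |f z| ≤ M := fun z => le_trans (hM₀ z) (le_max_left _ _)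
  have hM0 : 0 ≤ M := le_max_right _ _
  rw [Metric.tendstoUniformlyOn_iff]
  intro ε hε
  -- uniform continuity on a compact thickening
  set T : Set (EuclideanSpace ℝ (Fin (n - 1))) := Metric.cthickening 1 K with hT
  have hTc : IsCompact T := hK.cthickening
  have hUC : UniformContinuousOn f T := hTc.uniformContinuousOn_of_continuous hf_cont.continuousOn
  obtain ⟨δ₀, hδ₀, hδ₀'⟩ := Metric.uniformContinuousOn_iff.mp hUC (ε/4) (by positivity)
  set δ : ℝ := min δ₀ 1 with hδdef
  have hδpos : 0 < δ := lt_min hδ₀ one_pos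
  have hδ1 : δ ≤ 1 := min_le_right _ _
  -- tail estimate
  set ε₂ : ℝ := sphereMeasure n * ε / (8 * (M + 1)) with hε₂
  have hε₂pos : 0 < ε₂ := by positivity
  have htail : Tendsto (fun i : ℕ => ∫ u in Metric.ball (0:EuclideanSpace ℝ (Fin (n - 1))) i, g u) atTop (𝓝 (∫ u, g u)) := by
    have h := tendsto_setIntegral_of_monotone (μ := volume)
      (s := fun i : ℕ => Metric.ball (0:EuclideanSpace ℝ (Fin (n - 1))) i) (f := g)
      (fun _ => measurableSet_ball)
      (fun i j hij => Metric.ball_subset_ball (by exact_mod_cast hij))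
      (by rw [Metric.iUnion_ball_nat]; exact hg_int.integrableOn)
    rwa [Metric.iUnion_ball_nat, setIntegral_univ] at h
  have hEv : ∀ᶠ i : ℕ in atTop, |(∫ u in Metric.ball (0:EuclideanSpace ℝ (Fin (n - 1))) i, g u) - ∫ u, g u| < ε₂ := by
    have := htail.eventually (eventually_abs_sub_lt (∫ u, g u) hε₂pos)
    simpa using this
  obtain ⟨R, hR⟩ := hEv.exists
  have hRtail : ∫ u in (Metric.ball (0:EuclideanSpace ℝ (Fin (n - 1))) R)ᶜ, g u ≤ ε₂ := by
    have hsplit : (∫ u in Metric.ball (0:EuclideanSpace ℝ (Fin (n - 1))) R, g u) + ∫ u in (Metric.ball (0:EuclideanSpace ℝ (Fin (n - 1))) R)ᶜ, g u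
        = ∫ u, g u := integral_add_compl measurableSet_ball hg_int
    have : (∫ u in (Metric.ball (0:EuclideanSpace ℝ (Fin (n - 1))) R)ᶜ, g u) = (∫ u, g u) - ∫ u in Metric.ball (0:EuclideanSpace ℝ (Fin (n - 1))) R, g u := by
      linarith
    rw [this]
    have := abs_lt.mp hR
    linarith [this.1, this.2]
  -- main estimate
  have hxev : Ioo (0:ℝ) (δ / ((R:ℝ) + 1)) ∈ 𝓝[>] (0:ℝ) :=
    Ioo_mem_nhdsGT (by positivity)
  filter_upwards [hxev] with x hx
  intro y hy
  have hx0 : 0 < x := hx.1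
  have hxδ : x * ((R:ℝ) + 1) < δ := by
    have := hx.2
    rw [div_eq_mul_inv] at this
    have hR1 : (0:ℝ) < (R:ℝ) + 1 := by positivity
    calc x * ((R:ℝ) + 1) < δ / ((R:ℝ) + 1) * ((R:ℝ) + 1) := by
          exact mul_lt_mul_of_pos_right hx.2 hR1
      _ = δ := by field_simp
  -- pointwise bound on the difference factor
  set Δ : EuclideanSpace ℝ (Fin (n - 1)) → ℝ := fun u => f (y - x • u) - f y with hΔ
  have hΔcont : Continuous Δ := by
    apply Continuous.sub _ continuous_const
    exact hf_cont.comp (continuous_const.sub (continuous_id.const_smul x))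
  have hΔbdd : ∀ u, |Δ u| ≤ 2 * M := by
    intro u
    calc |Δ u| ≤ |f (y - x • u)| + |f y| := abs_sub _ _
      _ ≤ M + M := add_le_add (hMf _) (hMf _)
      _ = 2 * M := by ring
  -- integrand and its integrability
  have hint1 : Integrable (fun u => Δ u * g u) := by
    refine hg_int.bdd_mul (c := 2 * M) hΔcont.aestronglyMeasurable (ae_of_all _ fun u => ?_)
    rw [Real.norm_eq_abs]; exact hΔbdd u
  -- representation of the difference
  have hrepr : doubleLayer n f x y - (1/2) * f y
      = (1 / sphereMeasure n) * ∫ u, Δ u * g u := by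
    rw [doubleLayer, my_repr hn f hx0 y]
    have h1 : (1:ℝ)/2 * f y = (1 / sphereMeasure n) * ∫ u, f y * g u := by
      rw [integral_const_mul, hg_val]
      field_simp
    rw [h1, ← mul_sub]
    congr 1
    rw [← integral_sub]
    · congr 1; funext u; rw [hΔ]; ring
    · have hcont2 : Continuous fun u : EuclideanSpace ℝ (Fin (n - 1)) => f (y - x • u) :=
        hf_cont.comp (continuous_const.sub (continuous_id.const_smul x))
      have h : Integrable (fun u : EuclideanSpace ℝ (Fin (n - 1)) => f (y - x • u) * g u) :=
        hg_int.bdd_mul hcont2.aestronglyMeasurable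
          (c := M) (ae_of_all _ fun u => by rw [Real.norm_eq_abs]; exact hMf _)
      simpa [mul_comm] using h
    · exact hg_int.const_mul _
  -- estimate the integral
  have hball : ∀ u ∈ Metric.ball (0:EuclideanSpace ℝ (Fin (n - 1))) R, |Δ u * g u| ≤ (ε/4) * g u := by
    intro u hu
    rw [abs_mul, abs_of_nonneg (hg_nonneg u)]
    refine mul_le_mul_of_nonneg_right ?_ (hg_nonneg u)
    have hun : ‖u‖ < R := by simpa [Metric.mem_ball, dist_eq_norm] using hu
    have hdist : dist (y - x • u) y < δ := by
      rw [dist_eq_norm, sub_sub_cancel_left, norm_neg, norm_smul, Real.norm_eq_abs,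
        abs_of_pos hx0]
      nlinarith [norm_nonneg u, hx0.le]
    have hyT : y ∈ T := Metric.self_subset_cthickening K hy
    have hvT : (y - x • u) ∈ T := by
      apply Metric.mem_cthickening_of_dist_le (y - x • u) y 1 K hy
      exact le_trans hdist.le hδ1
    have := hδ₀' _ hvT _ hyT (lt_of_lt_of_le hdist (min_le_left _ _))
    rw [Real.dist_eq] at this
    exact le_of_lt this
  have hcompl : ∀ u ∈ (Metric.ball (0:EuclideanSpace ℝ (Fin (n - 1))) R)ᶜ, |Δ u * g u| ≤ (2*M) * g u := by
    intro u _
    rw [abs_mul, abs_of_nonneg (hg_nonneg u)]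
    exact mul_le_mul_of_nonneg_right (hΔbdd u) (hg_nonneg u)
  have hIbound : |∫ u, Δ u * g u| ≤ (ε/4) * (sphereMeasure n / 2) + 2*M*ε₂ := by
    have habs : |∫ u, Δ u * g u| ≤ ∫ u, |Δ u * g u| := by
      have h := norm_integral_le_integral_norm (μ := volume) (fun u => Δ u * g u)
      simp only [Real.norm_eq_abs] at h
      exact h
    have hsplit : (∫ u, |Δ u * g u|)
        = (∫ u in Metric.ball (0:EuclideanSpace ℝ (Fin (n - 1))) R, |Δ u * g u|)
          + ∫ u in (Metric.ball (0:EuclideanSpace ℝ (Fin (n - 1))) R)ᶜ, |Δ u * g u| :=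
      (integral_add_compl measurableSet_ball hint1.abs).symm
    have hb1 : (∫ u in Metric.ball (0:EuclideanSpace ℝ (Fin (n - 1))) R, |Δ u * g u|) ≤ (ε/4) * (sphereMeasure n / 2) := by
      calc (∫ u in Metric.ball (0:EuclideanSpace ℝ (Fin (n - 1))) R, |Δ u * g u|)
          ≤ ∫ u in Metric.ball (0:EuclideanSpace ℝ (Fin (n - 1))) R, (ε/4) * g u := by
            refine setIntegral_mono_on hint1.abs.integrableOn
              ((hg_int.const_mul _).integrableOn) measurableSet_ball hball
        _ ≤ (ε/4) * ∫ u, g u := by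
            rw [integral_const_mul]
            refine mul_le_mul_of_nonneg_left ?_ (by positivity)
            exact setIntegral_le_integral hg_int (ae_of_all _ hg_nonneg)
        _ = (ε/4) * (sphereMeasure n / 2) := by rw [hg_val]
    have hb2 : (∫ u in (Metric.ball (0:EuclideanSpace ℝ (Fin (n - 1))) R)ᶜ, |Δ u * g u|) ≤ 2*M*ε₂ := by
      calc (∫ u in (Metric.ball (0:EuclideanSpace ℝ (Fin (n - 1))) R)ᶜ, |Δ u * g u|)
          ≤ ∫ u in (Metric.ball (0:EuclideanSpace ℝ (Fin (n - 1))) R)ᶜ, (2*M) * g u := by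
            refine setIntegral_mono_on hint1.abs.integrableOn
              ((hg_int.const_mul _).integrableOn) measurableSet_ball.compl hcompl
        _ = (2*M) * ∫ u in (Metric.ball (0:EuclideanSpace ℝ (Fin (n - 1))) R)ᶜ, g u := integral_const_mul _ _
        _ ≤ 2*M*ε₂ := by
            refine mul_le_mul_of_nonneg_left hRtail (by positivity)
    linarith
  -- conclude
  rw [Real.dist_eq]
  have : |(1/2) * f y - doubleLayer n f x y| = |doubleLayer n f x y - (1/2) * f y| := abs_sub_comm _ _
  rw [this, hrepr, abs_mul, abs_of_nonneg (by positivity : (0:ℝ) ≤ 1 / sphereMeasure n)]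
  have hfin : (1 / sphereMeasure n) * |∫ u, Δ u * g u|
      ≤ (1 / sphereMeasure n) * ((ε/4) * (sphereMeasure n / 2) + 2*M*ε₂) := by
    exact mul_le_mul_of_nonneg_left hIbound (by positivity)
  have hval : (1 / sphereMeasure n) * ((ε/4) * (sphereMeasure n / 2) + 2*M*ε₂) < ε := by
    rw [one_div, inv_mul_eq_div, div_lt_iff₀ hσ]
    have hkey : (M + 1) * ε₂ = sphereMeasure n * ε / 8 := by
      rw [hε₂]
      field_simp
    nlinarith [hε₂pos, hσ, hε, hM0, mul_pos hσ hε]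
  exact lt_of_le_of_lt hfin hval

end Main
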